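/- For positive reals a, b with a ≠ b, the average of the arithmetic and geometric means is strictly less than the identric mean: (A(a,b) + G(a,b))/2 < I(a,b). -/

import Mathlib

open Real

noncomputable def Hf (s : ℝ) : ℝ :=
  2*s^2*Real.log s - (s^2-1)*(1 - Real.log 4 + 2*Real.log (1+s))

noncomputable def Hf1 (s : ℝ) : ℝ :=
  4*s*(Real.log s - Real.log (1+s)) + (4*Real.log 2 - 2)*s + 2

noncomputable def Hf2 (s : ℝ) : ℝ :=
  4*Real.log s - 4*Real.log (1+s) + 4/(1+s) + 4*Real.log 2 - 2

lemma log4 : Real.log 4 = 2 * Real.log 2 := by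
  rw [show (4:ℝ) = 2^2 by norm_num, Real.log_pow]; push_cast; ring

lemma hasDerivAt_Hf {s : ℝ} (hs : 0 < s) : HasDerivAt Hf (Hf1 s) s := by
  have h1s : (0:ℝ) < 1 + s := by linarith
  have h1 : HasDerivAt (fun x : ℝ => 2*x^2*Real.log x)
      (2*(2*s)*Real.log s + 2*s^2*(1/s)) s := by
    have := ((hasDerivAt_pow 2 s).const_mul 2).mul (Real.hasDerivAt_log hs.ne')
    refine this.congr_deriv ?_; ring
  have h2 : HasDerivAt (fun x : ℝ => (x^2-1)*(1 - Real.log 4 + 2*Real.log (1+x)))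
      ((2*s)*(1 - Real.log 4 + 2*Real.log (1+s)) + (s^2-1)*(2*(1/(1+s)))) s := by
    have hlog : HasDerivAt (fun x : ℝ => Real.log (1+x)) (1/(1+s)) s := by
      have := (((hasDerivAt_id s).const_add 1).log h1s.ne')
      simpa using this
    have := ((hasDerivAt_pow 2 s).sub_const 1).mul ((hlog.const_mul 2).const_add (1 - Real.log 4))
    refine this.congr_deriv ?_; ring
  have h := h1.sub h2
  refine h.congr_deriv ?_
  unfold Hf1
  rw [log4]
  field_simp
  ring

lemma hasDerivAt_Hf1 {s : ℝ} (hs : 0 < s) : HasDerivAt Hf1 (Hf2 s) s := by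
  have h1s : (0:ℝ) < 1 + s := by linarith
  have hlog : HasDerivAt (fun x : ℝ => Real.log (1+x)) (1/(1+s)) s := by
    have := (((hasDerivAt_id s).const_add 1).log h1s.ne')
    simpa using this
  have h1 : HasDerivAt (fun x : ℝ => 4*x*(Real.log x - Real.log (1+x)))
      (4*(Real.log s - Real.log (1+s)) + 4*s*(1/s - 1/(1+s))) s := by
    have := ((hasDerivAt_id s).const_mul 4).mul ((Real.hasDerivAt_log hs.ne').sub hlog)
    refine this.congr_deriv ?_
    simp only [id_eq, Pi.sub_apply]
    field_simp
  have h2 : HasDerivAt (fun x : ℝ => (4*Real.log 2 - 2)*x + 2)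
      (4*Real.log 2 - 2) s := by
    simpa using ((hasDerivAt_id s).const_mul (4*Real.log 2 - 2)).add_const 2
  have h := h1.add h2
  refine (h.congr_deriv ?_).congr_of_eventuallyEq (Filter.Eventually.of_forall fun x => ?_)
  · unfold Hf2; field_simp; ring
  · simp only [Pi.add_apply]; unfold Hf1; ring

lemma hasDerivAt_Hf2 {s : ℝ} (hs : 0 < s) : HasDerivAt Hf2 (4/(s*(1+s)^2)) s := by
  have h1s : (0:ℝ) < 1 + s := by linarith
  have hlog : HasDerivAt (fun x : ℝ => Real.log (1+x)) (1/(1+s)) s := by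
    have := (((hasDerivAt_id s).const_add 1).log h1s.ne')
    simpa using this
  have hinv : HasDerivAt (fun x : ℝ => 4/(1+x)) (-(4/(1+s)^2)) s := by
    have h := (((hasDerivAt_id s).const_add 1)).inv h1s.ne'
    have h4 := h.const_mul 4
    refine h4.congr_deriv ?_
    simp only [id_eq]
    ring
  have h := ((((Real.hasDerivAt_log hs.ne').const_mul 4).sub (hlog.const_mul 4)).add hinv).add_const (4*Real.log 2 - 2)
  refine (h.congr_deriv ?_).congr_of_eventuallyEq (Filter.Eventually.of_forall fun x => ?_)
  · field_simp; ring
  · simp only [Pi.add_apply, Pi.sub_apply]; unfold Hf2; ring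

lemma Hf_one : Hf 1 = 0 := by unfold Hf; simp

lemma Hf1_one : Hf1 1 = 0 := by
  unfold Hf1
  rw [show (1:ℝ)+1 = 2 by norm_num, Real.log_one]
  ring

lemma Hf2_one : Hf2 1 = 0 := by
  unfold Hf2
  rw [show (1:ℝ)+1 = 2 by norm_num, Real.log_one]
  norm_num

lemma Hf2_mono : StrictMonoOn Hf2 (Set.Ioi 0) := by
  apply strictMonoOn_of_deriv_pos (convex_Ioi 0)
  · exact fun x hx => (hasDerivAt_Hf2 hx).continuousAt.continuousWithinAt
  · intro x hx
    rw [interior_Ioi] at hx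
    have hx' : 0 < x := hx
    rw [(hasDerivAt_Hf2 hx').deriv]
    positivity

lemma Hf2_pos {s : ℝ} (hs : 1 < s) : 0 < Hf2 s := by
  have := Hf2_mono (Set.mem_Ioi.mpr one_pos) (Set.mem_Ioi.mpr (lt_trans one_pos hs)) hs
  rwa [Hf2_one] at this

lemma Hf2_neg {s : ℝ} (hs0 : 0 < s) (hs : s < 1) : Hf2 s < 0 := by
  have := Hf2_mono (Set.mem_Ioi.mpr hs0) (Set.mem_Ioi.mpr one_pos) hs
  rwa [Hf2_one] at this

lemma Hf1_pos {s : ℝ} (hs0 : 0 < s) (hs : s ≠ 1) : 0 < Hf1 s := by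
  rcases lt_or_gt_of_ne hs with h | h
  · have anti : StrictAntiOn Hf1 (Set.Ioc 0 1) := by
      apply strictAntiOn_of_deriv_neg (convex_Ioc 0 1)
      · exact fun x hx => (hasDerivAt_Hf1 hx.1).continuousAt.continuousWithinAt
      · intro x hx
        rw [interior_Ioc] at hx
        rw [(hasDerivAt_Hf1 hx.1).deriv]
        exact Hf2_neg hx.1 hx.2
    have := anti (Set.mem_Ioc.mpr ⟨hs0, h.le⟩) (Set.mem_Ioc.mpr ⟨one_pos, le_refl 1⟩) h
    rwa [Hf1_one] at this
  · have mono : StrictMonoOn Hf1 (Set.Ici 1) := by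
      apply strictMonoOn_of_deriv_pos (convex_Ici 1)
      · exact fun x hx => (hasDerivAt_Hf1 (lt_of_lt_of_le one_pos hx)).continuousAt.continuousWithinAt
      · intro x hx
        rw [interior_Ici] at hx
        rw [(hasDerivAt_Hf1 (lt_trans one_pos hx)).deriv]
        exact Hf2_pos hx
    have := mono (Set.mem_Ici.mpr (le_refl 1)) (Set.mem_Ici.mpr h.le) h
    rwa [Hf1_one] at this

lemma Hf_pos {s : ℝ} (hs : 1 < s) : 0 < Hf s := by
  have mono : StrictMonoOn Hf (Set.Ici 1) := by
    apply strictMonoOn_of_deriv_pos (convex_Ici 1)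
    · exact fun x hx => (hasDerivAt_Hf (lt_of_lt_of_le one_pos hx)).continuousAt.continuousWithinAt
    · intro x hx
      rw [interior_Ici] at hx
      rw [(hasDerivAt_Hf (lt_trans one_pos hx)).deriv]
      exact Hf1_pos (lt_trans one_pos hx) (ne_of_gt hx)
  have := mono (Set.mem_Ici.mpr (le_refl 1)) (Set.mem_Ici.mpr hs.le) hs
  rwa [Hf_one] at this

lemma Hf_neg {s : ℝ} (hs0 : 0 < s) (hs : s < 1) : Hf s < 0 := by
  have mono : StrictMonoOn Hf (Set.Ioc 0 1) := by
    apply strictMonoOn_of_deriv_pos (convex_Ioc 0 1)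
    · exact fun x hx => (hasDerivAt_Hf hx.1).continuousAt.continuousWithinAt
    · intro x hx
      rw [interior_Ioc] at hx
      rw [(hasDerivAt_Hf hx.1).deriv]
      exact Hf1_pos hx.1 (ne_of_lt hx.2)
  have := mono (Set.mem_Ioc.mpr ⟨hs0, hs.le⟩) (Set.mem_Ioc.mpr ⟨one_pos, le_refl 1⟩) hs
  rwa [Hf_one] at this

lemma key {s : ℝ} (hs0 : 0 < s) (hs : s ≠ 1) :
    2*Real.log (1+s) - Real.log 4 < 2*s^2*Real.log s/(s^2-1) - 1 := by
  have hD : s^2 - 1 ≠ 0 := by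
    intro h
    apply hs
    nlinarith
  set r := 2*s^2*Real.log s/(s^2-1) with hr
  have hrD : r * (s^2-1) = 2*s^2*Real.log s := by
    rw [hr]; field_simp
  rcases lt_or_gt_of_ne hs with h | h
  · have hDneg : s^2 - 1 < 0 := by nlinarith
    have hH := Hf_neg hs0 h
    unfold Hf at hH
    by_contra hc
    push_neg at hc
    nlinarith [mul_nonneg (by linarith : (0:ℝ) ≤ -(s^2-1))
      (by linarith : (0:ℝ) ≤ -(r - (1 - Real.log 4 + 2*Real.log (1+s))))]
  · have hDpos : (0:ℝ) < s^2 - 1 := by nlinarith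
    have hH := Hf_pos h
    unfold Hf at hH
    by_contra hc
    push_neg at hc
    nlinarith [mul_nonneg (by linarith : (0:ℝ) ≤ s^2-1)
      (by linarith : (0:ℝ) ≤ -(r - (1 - Real.log 4 + 2*Real.log (1+s))))]

theorem avg_arith_geom_lt_identric (a b : ℝ) (ha : 0 < a) (hb : 0 < b) (hab : a ≠ b) :
    ((a + b) / 2 + Real.sqrt (a * b)) / 2 <
      (1 / Real.exp 1) * (b ^ b / a ^ a) ^ (1 / (b - a)) := by
  have hp : 0 < Real.sqrt a := Real.sqrt_pos.mpr ha
  have hq : 0 < Real.sqrt b := Real.sqrt_pos.mpr hb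
  set p := Real.sqrt a with hpdef
  set q := Real.sqrt b with hqdef
  have hpa : p^2 = a := Real.sq_sqrt ha.le
  have hqb : q^2 = b := Real.sq_sqrt hb.le
  set s := q / p with hsdef
  have hs0 : 0 < s := div_pos hq hp
  have hq' : q = p * s := by rw [hsdef]; field_simp
  have hs1 : s ≠ 1 := by
    intro h
    apply hab
    rw [← hpa, ← hqb, hq', h]; ring
  have h1s : (0:ℝ) < 1 + s := by linarith
  have hXpos : (0:ℝ) < b ^ b / a ^ a :=
    div_pos (Real.rpow_pos_of_pos hb b) (Real.rpow_pos_of_pos ha a)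
  have hRHS : (1 / Real.exp 1) * (b ^ b / a ^ a) ^ (1 / (b - a))
      = Real.exp ((b * Real.log b - a * Real.log a) / (b - a) - 1) := by
    rw [Real.rpow_def_of_pos hXpos,
      Real.log_div (Real.rpow_pos_of_pos hb b).ne' (Real.rpow_pos_of_pos ha a).ne',
      Real.log_rpow hb, Real.log_rpow ha, Real.exp_sub,
      show (b * Real.log b - a * Real.log a) * (1/(b-a))
        = (b * Real.log b - a * Real.log a) / (b-a) from by ring]
    ring
  rw [hRHS]
  have hLpos : 0 < ((a + b) / 2 + Real.sqrt (a * b)) / 2 := by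
    have : 0 < Real.sqrt (a*b) := Real.sqrt_pos.mpr (mul_pos ha hb)
    positivity
  rw [← Real.log_lt_iff_lt_exp hLpos]
  have hab' : Real.sqrt (a*b) = p * q := Real.sqrt_mul ha.le b
  have hL : ((a + b) / 2 + Real.sqrt (a * b)) / 2 = ((p+q)/2)^2 := by
    rw [hab', ← hpa, ← hqb]; ring
  rw [hL, Real.log_pow]
  push_cast
  have hlog1 : Real.log ((p+q)/2) = Real.log p + Real.log (1+s) - Real.log 2 := by
    rw [hq', show p + p*s = p*(1+s) from by ring,
      Real.log_div (by positivity) (by norm_num),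
      Real.log_mul hp.ne' h1s.ne']
  have hE : (b * Real.log b - a * Real.log a) / (b - a)
      = 2*Real.log p + 2*s^2*Real.log s/(s^2-1) := by
    have hlogb : Real.log b = 2*(Real.log p + Real.log s) := by
      rw [← hqb, hq', Real.log_pow, Real.log_mul hp.ne' hs0.ne']
      push_cast; ring
    have hloga : Real.log a = 2*Real.log p := by
      rw [← hpa, Real.log_pow]; push_cast; ring
    have hD : s^2 - 1 ≠ 0 := by
      intro h
      apply hs1
      nlinarith
    have hba : b - a = p^2*(s^2-1) := by rw [← hpa, ← hqb, hq']; ring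
    rw [hlogb, hloga, hba, ← hpa, ← hqb, hq']
    have hpden : p^2*(s^2-1) ≠ 0 := by
      intro h
      rcases mul_eq_zero.mp h with h' | h'
      · exact (pow_ne_zero 2 hp.ne') h'
      · exact hD h'
    field_simp
    ring
  rw [hE, hlog1]
  have := key hs0 hs1
  rw [log4] at this
  linarith
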